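/- Let f₀, f₁ ∈ PL₀(I) satisfy the relations [f₀f₁⁻¹, f₀⁻¹f₁f₀] = 1 and [f₀f₁⁻¹, f₀⁻²f₁f₀²] = 1. If A is an orbital of f₀ and B is an orbital of f₁ with A ∩ B ≠ ∅, then A ⊆ B or B ⊆ A. -/

import Mathlib

/-- The support of a permutation `f` of `ℝ` : the set of points moved by `f`. -/
def Supp (f : Equiv.Perm ℝ) : Set ℝ := {x : ℝ | f x ≠ x}

/-- `IsPL0 f` says that `f` is (the extension by the identity on `ℝ \ [0,1]` of) a
piecewise-linear orientation-preserving homeomorphism of the unit interval `[0,1]`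
with only finitely many breakpoints; this represents membership in `PL₀(I)`.
The finite set `B` collects the possible points of non-differentiability: away from
`B` the map is locally affine. -/
def IsPL0 (f : Equiv.Perm ℝ) : Prop :=
  StrictMono ⇑f ∧ (∀ x : ℝ, x ≤ 0 → f x = x) ∧ (∀ x : ℝ, 1 ≤ x → f x = x) ∧
    ∃ B : Finset ℝ, ∀ x : ℝ, x ∉ B → ∃ s t : ℝ, ∀ᶠ y in nhds x, f y = s * y + t

/-- `IsOrbital f a b` : the open interval `(a,b)` is an orbital of `f`, i.e. a
connected component of `Supp f` (an open interval contained in the support whose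
endpoints are fixed by `f`). -/
def IsOrbital (f : Equiv.Perm ℝ) (a b : ℝ) : Prop :=
  a < b ∧ Set.Ioo a b ⊆ Supp f ∧ f a = a ∧ f b = b

open scoped commutatorElement

/-- The two defining relations `[f₀f₁⁻¹, f₁^{f₀}] = 1` and `[f₀f₁⁻¹, f₁^{f₀²}] = 1`
of Thompson's group `F`, for the pair `(f₀, f₁)`.  The paper composes in word order
(functions act on the right), so the paper's word `f₀f₁⁻¹` is the group element
`f₁⁻¹ * f₀` in Mathlib's left-action convention, and the conjugate
`f₁^{f₀} = f₀⁻¹f₁f₀` is the element `f₀ * f₁ * f₀⁻¹`.  Recall `⁅a,b⁆ = 1 ↔ a*b = b*a`. -/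
def ThompsonRel (f₀ f₁ : Equiv.Perm ℝ) : Prop :=
  ⁅f₁⁻¹ * f₀, f₀ * f₁ * f₀⁻¹⁆ = 1 ∧ ⁅f₁⁻¹ * f₀, f₀ ^ 2 * f₁ * (f₀ ^ 2)⁻¹⁆ = 1

open Set Filter Topology
section ThompsonAux

theorem Equiv.Perm.apply_inv_self {α : Type*} (f : Equiv.Perm α) (x : α) : f (f⁻¹ x) = x :=
  Equiv.apply_symm_apply f x

theorem Equiv.Perm.inv_apply_self {α : Type*} (f : Equiv.Perm α) (x : α) : f⁻¹ (f x) = x :=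
  Equiv.symm_apply_apply f x

variable {f g u v : Equiv.Perm ℝ}

theorem IsPL0.continuous (hf : IsPL0 f) : Continuous ⇑f := by
  have : ⇑(StrictMono.orderIsoOfSurjective ⇑f hf.1 f.surjective) = ⇑f :=
    StrictMono.coe_orderIsoOfSurjective ..
  rw [← this]
  exact OrderIso.continuous _

theorem IsPL0.inv_strictMono (hf : IsPL0 f) : StrictMono ⇑f⁻¹ := by
  intro x y hxy
  by_contra h
  push_neg at h
  have := hf.1.monotone h
  simp only [Equiv.Perm.apply_inv_self] at this
  exact absurd (lt_of_lt_of_le hxy this) (lt_irrefl _)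

theorem IsPL0.inv_continuous (hf : IsPL0 f) : Continuous ⇑f⁻¹ := by
  set e := StrictMono.orderIsoOfSurjective ⇑f hf.1 f.surjective with he
  have hcoe : ⇑e = ⇑f := StrictMono.coe_orderIsoOfSurjective ..
  have hsymm : ⇑e.symm = ⇑f⁻¹ := by
    funext x
    apply f.injective
    simp only [Equiv.Perm.apply_inv_self]
    calc f (e.symm x) = e (e.symm x) := (congrFun hcoe _).symm
      _ = x := e.apply_symm_apply x
  rw [← hsymm]
  exact OrderIso.continuous _

theorem IsPL0.inv (hf : IsPL0 f) : IsPL0 f⁻¹ := by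
  refine ⟨hf.inv_strictMono, ?_, ?_, ?_⟩
  · intro x hx; conv_lhs => rw [← hf.2.1 x hx]
    simp
  · intro x hx; conv_lhs => rw [← hf.2.2.1 x hx]
    simp
  · obtain ⟨B, hB⟩ := hf.2.2.2
    refine ⟨B.image ⇑f, ?_⟩
    intro x hx
    have hz : f⁻¹ x ∉ B := fun h => hx (Finset.mem_image.2 ⟨_, h, by simp⟩)
    obtain ⟨s, t, hst⟩ := hB _ hz
    obtain ⟨ε, hε, hset⟩ := Metric.eventually_nhds_iff.1 hst
    have hs : s ≠ 0 := by
      intro h0'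
      have e1 : f (f⁻¹ x) = s * (f⁻¹ x) + t := hset (by simp [hε])
      have e2 : f (f⁻¹ x + ε/2) = s * (f⁻¹ x + ε/2) + t := by
        apply hset
        simp only [Real.dist_eq, add_sub_cancel_left, abs_of_pos (by linarith : (0:ℝ) < ε/2)]
        linarith
      have := hf.1 (show f⁻¹ x < f⁻¹ x + ε/2 by linarith)
      rw [e1, e2, h0'] at this; simp at this
    refine ⟨1/s, -t/s, ?_⟩
    have htend : Tendsto ⇑f⁻¹ (𝓝 x) (𝓝 (f⁻¹ x)) := hf.inv_continuous.tendsto x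
    have hev : ∀ᶠ y in 𝓝 x, f (f⁻¹ y) = s * (f⁻¹ y) + t := htend.eventually hst
    filter_upwards [hev] with y hy
    simp only [Equiv.Perm.apply_inv_self] at hy
    set w := f⁻¹ y with hw
    field_simp
    linarith

theorem IsPL0.mul (hf : IsPL0 f) (hg : IsPL0 g) : IsPL0 (f * g) := by
  refine ⟨?_, ?_, ?_, ?_⟩
  · intro x y hxy
    simpa using hf.1 (hg.1 hxy)
  · intro x hx
    simp only [Equiv.Perm.mul_apply, hg.2.1 x hx, hf.2.1 x hx]
  · intro x hx
    simp only [Equiv.Perm.mul_apply, hg.2.2.1 x hx, hf.2.2.1 x hx]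
  · obtain ⟨Bf, hBf⟩ := hf.2.2.2
    obtain ⟨Bg, hBg⟩ := hg.2.2.2
    refine ⟨Bg ∪ Bf.image ⇑g⁻¹, ?_⟩
    intro x hx
    simp only [Finset.mem_union, Finset.mem_image, not_or, not_exists] at hx
    have hx1 : x ∉ Bg := hx.1
    have hx2 : g x ∉ Bf := fun h => hx.2 (g x) ⟨h, by simp⟩
    obtain ⟨s, t, hst⟩ := hBg _ hx1
    obtain ⟨s', t', hst'⟩ := hBf _ hx2
    refine ⟨s' * s, s' * t + t', ?_⟩
    have hev : ∀ᶠ y in 𝓝 x, f (g y) = s' * (g y) + t' :=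
      (hg.continuous.tendsto x).eventually hst'
    filter_upwards [hev, hst] with y h1 h2
    rw [Equiv.Perm.mul_apply, h1, h2]
    ring

theorem IsPL0.one : IsPL0 (1 : Equiv.Perm ℝ) := by
  refine ⟨fun x y h => by simpa using h, by simp, by simp, ⟨∅, fun x _ => ⟨1, 0, ?_⟩⟩⟩
  filter_upwards with y; simp

theorem IsPL0.pow (hf : IsPL0 f) (n : ℕ) : IsPL0 (f ^ n) := by
  induction n with
  | zero => simpa using IsPL0.one
  | succ n ih => rw [pow_succ]; exact ih.mul hf

theorem comm_apply (h : Commute u v) (x : ℝ) : u (v x) = v (u x) := by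
  have := congrArg (fun w : Equiv.Perm ℝ => w x) h.eq
  simpa [Equiv.Perm.mul_apply] using this

theorem comm_fix (h : Commute u v) {x : ℝ} (hx : u x = x) : u (v x) = v x := by
  rw [comm_apply h, hx]

theorem comm_supp (h : Commute u v) {x : ℝ} (hx : x ∈ Supp u) : v x ∈ Supp u := by
  intro hfix
  rw [comm_apply h] at hfix
  exact hx (v.injective hfix)

theorem orbital_mapsTo (hsm : StrictMono ⇑f) {α β : ℝ} (hα : f α = α) (hβ : f β = β)
    {x : ℝ} (hx : x ∈ Set.Ioo α β) : f x ∈ Set.Ioo α β := by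
  constructor
  · calc α = f α := hα.symm
      _ < f x := hsm hx.1
  · calc f x < f β := hsm hx.2
      _ = β := hβ

theorem orbital_pow_mem (hsm : StrictMono ⇑f) {α β : ℝ} (hα : f α = α) (hβ : f β = β)
    {x : ℝ} (hx : x ∈ Set.Ioo α β) (n : ℕ) : (f ^ n) x ∈ Set.Ioo α β := by
  induction n with
  | zero => simpa using hx
  | succ n ih =>
      rw [pow_succ', Equiv.Perm.mul_apply]
      exact orbital_mapsTo hsm hα hβ ih

theorem orbital_subset_unit (hf : IsPL0 f) {α β : ℝ} (ho : IsOrbital f α β) :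
    0 ≤ α ∧ β ≤ 1 := by
  constructor
  · by_contra h
    push_neg at h
    set z := min β 0
    have hz : (α + z)/2 ∈ Set.Ioo α β := by
      constructor
      · have : α < z := lt_min ho.1 h
        linarith
      · have h1 : (α + z)/2 < z := by
          have : α < z := lt_min ho.1 h
          linarith
        exact lt_of_lt_of_le h1 (min_le_left _ _)
    have hle : (α + z)/2 ≤ 0 := by
      have : α < z := lt_min ho.1 h
      have : z ≤ 0 := min_le_right _ _
      linarith [lt_min ho.1 h]
    exact ho.2.1 hz (hf.2.1 _ hle)
  · by_contra h
    push_neg at h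
    set z := max α 1
    have hz : (z + β)/2 ∈ Set.Ioo α β := by
      constructor
      · have h1 : z < β := max_lt ho.1 h
        calc α ≤ z := le_max_left _ _
          _ < (z + β)/2 := by linarith
      · have h1 : z < β := max_lt ho.1 h
        linarith
    have hge : 1 ≤ (z + β)/2 := by
      have h1 : z < β := max_lt ho.1 h
      have : (1:ℝ) ≤ z := le_max_right _ _
      linarith
    exact ho.2.1 hz (hf.2.2.1 _ hge)

theorem orbital_sign (hf : IsPL0 f) {α β : ℝ} (ho : IsOrbital f α β) {x y : ℝ}
    (hx : x ∈ Set.Ioo α β) (hy : y ∈ Set.Ioo α β) (hfx : x < f x) : y < f y := by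
  rcases lt_trichotomy y (f y) with h | h | h
  · exact h
  · exact absurd h.symm (ho.2.1 hy)
  · exfalso
    have hc : ContinuousOn (fun z => f z - z) (Set.uIcc x y) :=
      (hf.continuous.sub continuous_id).continuousOn
    have h0 : (0:ℝ) ∈ Set.uIcc (f x - x) (f y - y) := by
      rw [Set.mem_uIcc]
      right; constructor <;> linarith
    obtain ⟨z, hz, hz0⟩ := intermediate_value_uIcc hc h0
    have hzI : z ∈ Set.Ioo α β := by
      rw [Set.uIcc_eq_union] at hz
      rcases hz with h' | h'
      · exact ⟨lt_of_lt_of_le hx.1 h'.1, lt_of_le_of_lt h'.2 hy.2⟩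
      · exact ⟨lt_of_lt_of_le hy.1 h'.1, lt_of_le_of_lt h'.2 hx.2⟩
    have : f z = z := by dsimp at hz0; linarith
    exact ho.2.1 hzI this

theorem germ_unique {u : ℝ → ℝ} {y s1 t1 s2 t2 : ℝ}
    (h1 : ∀ᶠ z in 𝓝 y, u z = s1 * z + t1) (h2 : ∀ᶠ z in 𝓝 y, u z = s2 * z + t2) :
    s1 = s2 ∧ t1 = t2 := by
  obtain ⟨ε, hε, hset⟩ := Metric.eventually_nhds_iff.1 (h1.and h2)
  have e1 := hset (show dist y y < ε by simpa using hε)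
  have e2 := hset (show dist (y + ε/2) y < ε by
    simp only [Real.dist_eq, add_sub_cancel_left, abs_of_pos (by linarith : (0:ℝ) < ε/2)]
    linarith)
  have q1 : s1 * y + t1 = s2 * y + t2 := by rw [← e1.1, ← e1.2]
  have q2 : s1 * (y + ε/2) + t1 = s2 * (y + ε/2) + t2 := by rw [← e2.1, ← e2.2]
  have hs : s1 = s2 := by
    have : s1 * (ε/2) = s2 * (ε/2) := by linarith
    have hne : ε ≠ 0 := by linarith
    exact mul_right_cancel₀ (div_ne_zero hne two_ne_zero) this
  exact ⟨hs, by rw [hs] at q1; linarith⟩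

theorem affine_on_Ioo {u : ℝ → ℝ} {p q : ℝ} (hpq : p < q)
    (hloc : ∀ y ∈ Set.Ioo p q, ∃ s t : ℝ, ∀ᶠ z in 𝓝 y, u z = s * z + t) :
    ∃ s t : ℝ, ∀ y ∈ Set.Ioo p q, u y = s * y + t := by
  have hy0 : (p + q)/2 ∈ Set.Ioo p q := ⟨by linarith, by linarith⟩
  obtain ⟨s, t, hst⟩ := hloc _ hy0
  refine ⟨s, t, ?_⟩
  set U : Set ℝ := {y | ∀ᶠ z in 𝓝 y, u z = s * z + t} with hU
  set V : Set ℝ := ⋃ (st : ℝ × ℝ) (_ : st ≠ (s, t)), {y | ∀ᶠ z in 𝓝 y, u z = st.1 * z + st.2}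
    with hV
  have hUopen : IsOpen U := isOpen_setOf_eventually_nhds
  have hVopen : IsOpen V := by
    apply isOpen_iUnion; intro st; apply isOpen_iUnion; intro _
    exact isOpen_setOf_eventually_nhds
  have hcover : Set.Ioo p q ⊆ U ∪ V := by
    intro y hy
    obtain ⟨s', t', h'⟩ := hloc y hy
    by_cases hc : (s', t') = (s, t)
    · left
      rw [Prod.mk.injEq] at hc
      rw [hU]; simpa [hc.1, hc.2] using h'
    · right
      exact Set.mem_iUnion.2 ⟨(s', t'), Set.mem_iUnion.2 ⟨hc, h'⟩⟩
  have hdisj : (Set.Ioo p q ∩ (U ∩ V)) = ∅ := by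
    ext y
    simp only [Set.mem_inter_iff, Set.mem_empty_iff_false, iff_false, not_and]
    intro _ hyU hyV
    obtain ⟨st, hst'⟩ := Set.mem_iUnion.1 hyV
    obtain ⟨hne, hev⟩ := Set.mem_iUnion.1 hst'
    obtain ⟨h1, h2⟩ := germ_unique hev hyU
    exact hne (by rw [Prod.ext_iff]; exact ⟨h1, h2⟩)
  have hVempty : Set.Ioo p q ∩ V = ∅ := by
    by_contra h
    obtain ⟨y, hy⟩ := Set.nonempty_iff_ne_empty.2 h
    have := isPreconnected_Ioo (a := p) (b := q) U V hUopen hVopen hcover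
      ⟨_, hy0, hst⟩ ⟨y, hy⟩
    rw [hdisj] at this
    exact Set.not_nonempty_empty this
  intro y hy
  have hyU : y ∈ U := by
    rcases hcover hy with h | h
    · exact h
    · exact absurd (Set.mem_inter hy h) (by rw [hVempty]; simp)
  exact hyU.self_of_nhds

theorem germ_id (hu : IsPL0 u) {L : ℝ} {x : ℕ → ℝ}
    (hmono : StrictMono x) (hfix : ∀ n, u (x n) = x n)
    (hlim : Filter.Tendsto x Filter.atTop (𝓝 L)) :
    ∃ ε > 0, ∀ y ∈ Set.Ioo (L - ε) L, u y = y := by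
  have hxltL : ∀ n, x n < L := by
    intro n
    have h1 : x n < x (n + 1) := hmono (Nat.lt_succ_self n)
    have h2 : x (n + 1) ≤ L := hmono.monotone.ge_of_tendsto hlim (n+1)
    linarith
  -- choose ε avoiding breakpoints below L
  obtain ⟨B, hB⟩ := hu.2.2.2
  have hex : ∃ ε > 0, ∀ b ∈ B, b ≤ L - ε ∨ L ≤ b := by
    classical
    by_cases hTne : (B.filter (fun r => r < L)).Nonempty
    · have hmemB := Finset.mem_filter.1 ((B.filter (fun r => r < L)).max'_mem hTne)
      refine ⟨L - (B.filter (fun r => r < L)).max' hTne, by linarith [hmemB.2], ?_⟩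
      intro b hb
      by_cases hbL : b < L
      · left
        have hmem2 : b ∈ B.filter (fun r => r < L) := Finset.mem_filter.2 ⟨hb, hbL⟩
        have : b ≤ (B.filter (fun r => r < L)).max' hTne := Finset.le_max' _ b hmem2
        linarith
      · right; linarith
    · refine ⟨1, one_pos, ?_⟩
      intro b hb
      by_cases hbL : b < L
      · exact absurd ⟨b, Finset.mem_filter.2 ⟨hb, hbL⟩⟩ hTne
      · right; linarith
  obtain ⟨ε, hε, hεB⟩ := hex
  refine ⟨ε, hε, ?_⟩
  have haff : ∃ s t : ℝ, ∀ y ∈ Set.Ioo (L - ε) L, u y = s * y + t := by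
    apply affine_on_Ioo (by linarith)
    intro y hy
    apply hB
    intro hyB
    rcases hεB y hyB with h | h
    · linarith [hy.1]
    · linarith [hy.2]
  obtain ⟨s, t, hst⟩ := haff
  -- two fixed points inside
  have hev : ∀ᶠ n in Filter.atTop, x n > L - ε := by
    apply hlim.eventually
    exact eventually_gt_nhds (by linarith)
  obtain ⟨N, hN⟩ := hev.exists
  have hxN : x N ∈ Set.Ioo (L - ε) L := ⟨hN, hxltL N⟩
  have hxN1 : x (N+1) ∈ Set.Ioo (L - ε) L :=
    ⟨lt_trans hN (hmono (Nat.lt_succ_self N)), hxltL (N+1)⟩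
  have e1 : s * x N + t = x N := by rw [← hst _ hxN]; exact hfix N
  have e2 : s * x (N+1) + t = x (N+1) := by rw [← hst _ hxN1]; exact hfix (N+1)
  have hxne : x N ≠ x (N+1) := ne_of_lt (hmono (Nat.lt_succ_self N))
  have hs1 : s = 1 := by
    by_contra hs
    have : x N = x (N+1) := by
      have d1 : (s - 1) * x N = -t := by linarith
      have d2 : (s - 1) * x (N+1) = -t := by linarith
      have := d1.trans d2.symm
      have hs' : s - 1 ≠ 0 := fun h => hs (by linarith)
      exact mul_left_cancel₀ hs' this
    exact hxne this
  have ht0 : t = 0 := by rw [hs1] at e1; linarith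
  intro y hy
  rw [hst y hy, hs1, ht0]
  ring

theorem perm_pow_succ_apply (f : Equiv.Perm ℝ) (n : ℕ) (x : ℝ) :
    (f ^ (n+1)) x = f ((f ^ n) x) := by
  rw [pow_succ', Equiv.Perm.mul_apply]

theorem orbit_tendsto_top (hf : IsPL0 f) {α β : ℝ} (ho : IsOrbital f α β)
    (hsign : ∀ y ∈ Set.Ioo α β, y < f y) {x : ℝ} (hx : x ∈ Set.Ioo α β) :
    Filter.Tendsto (fun n : ℕ => (f ^ n) x) Filter.atTop (𝓝 β) := by
  set a : ℕ → ℝ := fun n => (f ^ n) x with ha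
  have hmem : ∀ n, a n ∈ Set.Ioo α β := fun n =>
    orbital_pow_mem hf.1 ho.2.2.1 ho.2.2.2 hx n
  have hstep : ∀ n, a (n+1) = f (a n) := fun n => perm_pow_succ_apply f n x
  have hmono : StrictMono a := by
    apply strictMono_nat_of_lt_succ
    intro n
    rw [hstep n]
    exact hsign _ (hmem n)
  have hbdd : BddAbove (Set.range a) := ⟨β, by rintro y ⟨n, rfl⟩; exact (hmem n).2.le⟩
  have htop : Filter.Tendsto a Filter.atTop (𝓝 (⨆ n, a n)) :=
    tendsto_atTop_ciSup hmono.monotone hbdd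
  set L := ⨆ n, a n with hL
  have hLfix : f L = L := by
    have h1 : Filter.Tendsto (fun n => a (n+1)) Filter.atTop (𝓝 L) :=
      htop.comp (Filter.tendsto_add_atTop_nat 1)
    have h2 : Filter.Tendsto (fun n => f (a n)) Filter.atTop (𝓝 (f L)) :=
      (hf.continuous.tendsto L).comp htop
    have : Filter.Tendsto (fun n => a (n+1)) Filter.atTop (𝓝 (f L)) := by
      simpa only [hstep] using h2
    exact tendsto_nhds_unique this h1
  have hxL : x ≤ L := by
    have := le_ciSup hbdd 0
    simpa [ha] using this
  have hLβ : L ≤ β := ciSup_le fun n => (hmem n).2.le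
  have : L = β := by
    rcases lt_or_eq_of_le hLβ with h | h
    · exact absurd hLfix (ho.2.1 ⟨lt_of_lt_of_le hx.1 hxL, h⟩)
    · exact h
  rw [← this]
  exact htop

/-- reflection x ↦ 1 - x as a permutation -/
def ρ : Equiv.Perm ℝ :=
  ⟨fun x => 1 - x, fun x => 1 - x, fun x => by ring, fun x => by ring⟩

@[simp] theorem ρ_apply (x : ℝ) : ρ x = 1 - x := rfl
@[simp] theorem ρ_inv_apply (x : ℝ) : ρ⁻¹ x = 1 - x := rfl

theorem ρ_conj_apply (f : Equiv.Perm ℝ) (x : ℝ) : (ρ * f * ρ⁻¹) x = 1 - f (1 - x) := by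
  simp [Equiv.Perm.mul_apply]

theorem ρ_pl0 (hf : IsPL0 f) : IsPL0 (ρ * f * ρ⁻¹) := by
  refine ⟨?_, ?_, ?_, ?_⟩
  · intro x y hxy
    rw [ρ_conj_apply, ρ_conj_apply]
    have : 1 - y < 1 - x := by linarith
    have := hf.1 this
    linarith
  · intro x hx
    rw [ρ_conj_apply, hf.2.2.1 (1-x) (by linarith)]
    ring
  · intro x hx
    rw [ρ_conj_apply, hf.2.1 (1-x) (by linarith)]
    ring
  · obtain ⟨B, hB⟩ := hf.2.2.2
    refine ⟨B.image (fun t => 1 - t), ?_⟩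
    intro x hx
    have hz : 1 - x ∉ B := by
      intro h
      exact hx (Finset.mem_image.2 ⟨_, h, by ring⟩)
    obtain ⟨s, t, hst⟩ := hB _ hz
    refine ⟨s, 1 - s - t, ?_⟩
    have hcont : Filter.Tendsto (fun y : ℝ => 1 - y) (𝓝 x) (𝓝 (1 - x)) :=
      ((continuous_const.sub continuous_id).tendsto x)
    have hev : ∀ᶠ y in 𝓝 x, f (1 - y) = s * (1 - y) + t := hcont.eventually hst
    filter_upwards [hev] with y hy
    rw [ρ_conj_apply, hy]
    ring

theorem ρ_orbital {α β : ℝ} (ho : IsOrbital f α β) :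
    IsOrbital (ρ * f * ρ⁻¹) (1 - β) (1 - α) := by
  refine ⟨by linarith [ho.1], ?_, ?_, ?_⟩
  · intro x hx
    have hmem : 1 - x ∈ Set.Ioo α β := ⟨by linarith [hx.2], by linarith [hx.1]⟩
    have := ho.2.1 hmem
    intro hcon
    rw [ρ_conj_apply] at hcon
    exact this (by linarith)
  · rw [ρ_conj_apply]
    have : (1:ℝ) - (1 - β) = β := by ring
    rw [this, ho.2.2.2]
  · rw [ρ_conj_apply]
    have : (1:ℝ) - (1 - α) = α := by ring
    rw [this, ho.2.2.1]

theorem ρ_conj_pow (f : Equiv.Perm ℝ) (n : ℕ) : (ρ * f * ρ⁻¹) ^ n = ρ * f ^ n * ρ⁻¹ := by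
  have : ρ * f * ρ⁻¹ = (MulAut.conj ρ) f := rfl
  rw [this, ← map_pow]
  rfl

theorem IsOrbital.inv {α β : ℝ} (ho : IsOrbital f α β) : IsOrbital f⁻¹ α β := by
  refine ⟨ho.1, ?_, ?_, ?_⟩
  · intro x hx h
    apply ho.2.1 hx
    conv_lhs => rw [← h]
    simp
  · have h := ho.2.2.1
    conv_lhs => rw [← h]
    simp
  · have h := ho.2.2.2
    conv_lhs => rw [← h]
    simp

theorem orbit_tendsto_bot (hf : IsPL0 f) {α β : ℝ} (ho : IsOrbital f α β)
    (hsign : ∀ y ∈ Set.Ioo α β, f y < y) {x : ℝ} (hx : x ∈ Set.Ioo α β) :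
    Filter.Tendsto (fun n : ℕ => (f ^ n) x) Filter.atTop (𝓝 α) := by
  have hpl := ρ_pl0 hf
  have horb := ρ_orbital ho
  have hsign' : ∀ y ∈ Set.Ioo (1-β) (1-α), y < (ρ * f * ρ⁻¹) y := by
    intro y hy
    rw [ρ_conj_apply]
    have := hsign (1 - y) ⟨by linarith [hy.2], by linarith [hy.1]⟩
    linarith
  have hx' : (1 - x) ∈ Set.Ioo (1-β) (1-α) := ⟨by linarith [hx.2], by linarith [hx.1]⟩
  have htop := orbit_tendsto_top hpl horb hsign' hx'
  have heq : ∀ n : ℕ, ((ρ * f * ρ⁻¹) ^ n) (1 - x) = 1 - (f ^ n) x := by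
    intro n
    rw [ρ_conj_pow]
    simp [Equiv.Perm.mul_apply]
  simp only [heq] at htop
  have := (tendsto_const_nhds (x := (1:ℝ)) (f := Filter.atTop (α := ℕ))).sub htop
  simpa using this

theorem orbital_conj (hsm : StrictMono ⇑g) {α β : ℝ} (ho : IsOrbital f α β) :
    IsOrbital (g * f * g⁻¹) (g α) (g β) := by
  refine ⟨hsm ho.1, ?_, ?_, ?_⟩
  · intro x hx
    have hmem : g⁻¹ x ∈ Set.Ioo α β := by
      constructor
      · have := hx.1
        by_contra h
        push_neg at h
        have := hsm.monotone h
        rw [Equiv.Perm.apply_inv_self] at this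
        exact absurd (lt_of_lt_of_le hx.1 this) (lt_irrefl _)
      · have := hx.2
        by_contra h
        push_neg at h
        have := hsm.monotone h
        rw [Equiv.Perm.apply_inv_self] at this
        exact absurd (lt_of_le_of_lt this hx.2) (lt_irrefl _)
    have hne := ho.2.1 hmem
    intro hcon
    simp only [Equiv.Perm.mul_apply] at hcon
    apply hne
    have : g (f (g⁻¹ x)) = g (g⁻¹ x) := by rw [hcon]; simp
    exact g.injective this
  · simp only [Equiv.Perm.mul_apply, Equiv.Perm.inv_apply_self, ho.2.2.1]
  · simp only [Equiv.Perm.mul_apply, Equiv.Perm.inv_apply_self, ho.2.2.2]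

theorem sign_inv {α β : ℝ} (hf : IsPL0 f) (ho : IsOrbital f α β)
    (hsign : ∀ y ∈ Set.Ioo α β, y < f y) : ∀ y ∈ Set.Ioo α β, f⁻¹ y < y := by
  intro y hy
  have hz : f⁻¹ y ∈ Set.Ioo α β :=
    orbital_mapsTo hf.inv_strictMono (by conv_lhs => rw [← ho.2.2.1]; simp)
      (by conv_lhs => rw [← ho.2.2.2]; simp) hy
  have := hsign _ hz
  rwa [Equiv.Perm.apply_inv_self] at this

/-- Key lemma: a PL0 map commuting with `u` fixes the endpoints of each orbital of `u`. -/
theorem orbfix (hu : IsPL0 u) (hv : IsPL0 v) (hc : Commute u v) {α β : ℝ}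
    (ho : IsOrbital u α β) : v α = α ∧ v β = β := by
  -- main step : v α > α is impossible
  have key : ∀ w : Equiv.Perm ℝ, IsPL0 w → Commute u w → ¬ (α < w α) := by
    intro w hw hcw hgt
    have hwfix : ∀ m : ℕ, u ((w ^ m) α) = (w ^ m) α := by
      intro m
      have hcm : Commute u (w ^ m) := hcw.pow_right m
      calc u ((w ^ m) α) = (w ^ m) (u α) := comm_apply hcm α
        _ = (w ^ m) α := by rw [ho.2.2.1]
    have hβle : β ≤ w α := by
      by_contra h
      push_neg at h
      exact ho.2.1 ⟨hgt, h⟩ (hwfix 1 |>.symm ▸ by simpa using hwfix 1)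
    set aa : ℕ → ℝ := fun m => (w ^ m) α with haa
    have hstep : ∀ m, aa (m+1) = w (aa m) := fun m => perm_pow_succ_apply w m α
    have hmono : StrictMono aa := by
      apply strictMono_nat_of_lt_succ
      intro m
      induction m with
      | zero => simpa [haa] using hgt
      | succ m ih =>
          rw [hstep (m+1), hstep m]
          exact hw.1 (hstep m ▸ ih)
    have hbdd : BddAbove (Set.range aa) := by
      refine ⟨1, ?_⟩
      rintro y ⟨m, rfl⟩
      have h1 : ∀ m, aa m ≤ 1 := by
        intro m
        induction m with
        | zero =>
            simp only [haa, pow_zero, Equiv.Perm.one_apply]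
            linarith [(orbital_subset_unit hu ho).2, ho.1]
        | succ m ih =>
            rw [hstep m]
            calc w (aa m) ≤ w 1 := hw.1.monotone ih
              _ = 1 := hw.2.2.1 1 le_rfl
      exact h1 m
    have htend : Filter.Tendsto aa Filter.atTop (𝓝 (⨆ m, aa m)) :=
      tendsto_atTop_ciSup hmono.monotone hbdd
    obtain ⟨ε, hε, hid⟩ := germ_id hu hmono hwfix htend
    set L := ⨆ m, aa m with hL
    have haale : ∀ m, aa m < L := by
      intro m
      have h1 : aa m < aa (m+1) := hmono (Nat.lt_succ_self m)
      have h2 : aa (m+1) ≤ L := le_ciSup hbdd (m+1)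
      linarith
    obtain ⟨M, hM⟩ := (htend.eventually (eventually_gt_nhds (by linarith : L - ε < L))).exists
    -- the midpoint moved into the gap
    set z := (α + β)/2 with hz
    have hzI : z ∈ Set.Ioo α β := ⟨by linarith [ho.1], by linarith [ho.1]⟩
    have hwz : (w ^ M) z ∈ Supp u := by
      have hsupp : z ∈ Supp u := ho.2.1 hzI
      have : Commute u (w ^ M) := hcw.pow_right M
      exact comm_supp this hsupp
    have hlow : aa M < (w ^ M) z := by
      have : (α : ℝ) < z := hzI.1
      exact (hw.pow M).1 this
    have hhigh : (w ^ M) z < aa (M+1) := by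
      have h1 : z < w α := lt_of_lt_of_le hzI.2 hβle
      have h2 : (w ^ M) z < (w ^ M) (w α) := (hw.pow M).1 h1
      have h3 : (w ^ M) (w α) = aa (M+1) := by
        rw [show (w ^ M) (w α) = (w ^ M * w) α from rfl, ← pow_succ]
      rwa [h3] at h2
    have hmem : (w ^ M) z ∈ Set.Ioo (L - ε) L := by
      constructor
      · linarith
      · have : aa (M+1) ≤ L := le_ciSup hbdd (M+1)
        linarith
    exact hwz (hid _ hmem)
  -- conclude for α
  have hvα : v α = α := by
    rcases lt_trichotomy (v α) α with h | h | h
    · exfalso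
      apply key v⁻¹ hv.inv hc.inv_right
      have := hv.inv_strictMono h
      rwa [Equiv.Perm.inv_apply_self] at this
    · exact h
    · exact absurd h (key v hv hc)
  refine ⟨hvα, ?_⟩
  rcases lt_trichotomy (v β) β with h | h | h
  · exfalso
    have hmem : v β ∈ Set.Ioo α β := by
      refine ⟨?_, h⟩
      have := hv.1 (lt_of_le_of_lt (le_refl α) ho.1)
      rw [hvα] at this
      exact this
    have : u (v β) = v β := comm_fix hc ho.2.2.2
    exact ho.2.1 hmem this
  · exact h
  · exfalso
    have hmem : v⁻¹ β ∈ Set.Ioo α β := by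
      constructor
      · have h2 : v⁻¹ α = α := by
          conv_lhs => rw [← hvα]
          simp
        have := hv.inv_strictMono ho.1
        rwa [h2] at this
      · have := hv.inv_strictMono h
        rwa [Equiv.Perm.inv_apply_self] at this
    have hsupp : v⁻¹ β ∈ Supp u := ho.2.1 hmem
    have : v (v⁻¹ β) ∈ Supp u := comm_supp hc hsupp
    rw [Equiv.Perm.apply_inv_self] at this
    exact this ho.2.2.2

theorem comm_all {f₀ f₁ : Equiv.Perm ℝ} (hrel : ThompsonRel f₀ f₁) :
    ∀ n : ℕ, 1 ≤ n → Commute (f₁⁻¹ * f₀) (f₀ ^ n * f₁ * (f₀ ^ n)⁻¹) := by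
  set g := f₁⁻¹ * f₀ with hg
  set K : ℕ → Equiv.Perm ℝ := fun n => f₀ ^ n * f₁ * (f₀ ^ n)⁻¹ with hK
  have D1 : Commute g (K 1) := by
    have := commutatorElement_eq_one_iff_commute.1 hrel.1
    simpa [hK, pow_one] using this
  have D2 : Commute g (K 2) := commutatorElement_eq_one_iff_commute.1 hrel.2
  have hKsucc : ∀ m : ℕ, K (m + 1) = f₀ * K m * f₀⁻¹ := by
    intro m
    simp only [hK, pow_succ']
    group
  have hf₀ : f₀ = f₁ * g := by rw [hg]; group
  have main : ∀ n : ℕ, Commute g (K (n + 1)) := by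
    intro n
    induction n using Nat.strong_induction_on with
    | _ n ih =>
      match n, ih with
      | 0, _ => exact D1
      | 1, _ => exact D2
      | (m+2), ih =>
        have IH1 : Commute g (K (m + 2)) := ih (m+1) (by omega)
        have IH2 : Commute g (K (m + 1)) := ih m (by omega)
        -- K (m+2) = f₁ * K (m+1) * f₁⁻¹
        have hC : K (m + 2) = f₁ * K (m + 1) * f₁⁻¹ := by
          rw [hKsucc (m+1)]
          conv_lhs => rw [hf₀]
          have hcomm : g * K (m+1) * g⁻¹ = K (m+1) := by
            rw [IH2.eq, mul_assoc, mul_inv_cancel, mul_one]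
          calc f₁ * g * K (m+1) * (f₁ * g)⁻¹
              = f₁ * (g * K (m+1) * g⁻¹) * f₁⁻¹ := by group
            _ = f₁ * K (m+1) * f₁⁻¹ := by rw [hcomm]
        -- K (m+3) = K 1 * K (m+2) * (K 1)⁻¹
        have hE : K (m + 3) = K 1 * K (m + 2) * (K 1)⁻¹ := by
          rw [hKsucc (m+2)]
          conv_lhs => rw [hC]
          conv_rhs => rw [hKsucc (m+1)]
          simp only [hK, pow_one]
          group
        rw [show m + 2 + 1 = m + 3 from rfl, hE]
        exact D1.mul_right (IH1.mul_right D1.inv_right)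
  intro n hn
  obtain ⟨m, rfl⟩ := Nat.exists_eq_add_of_le hn
  simpa [Nat.add_comm] using main m

theorem case1 {f₀ f₁ : Equiv.Perm ℝ} (h₀ : IsPL0 f₀) (h₁ : IsPL0 f₁)
    (hcomm : ∀ n : ℕ, 1 ≤ n → Commute (f₁⁻¹ * f₀) (f₀ ^ n * f₁ * (f₀ ^ n)⁻¹))
    {a c b d : ℝ} (ho₀ : IsOrbital f₀ a c) (ho₁ : IsOrbital f₁ b d)
    (hab : a < b) (hbc : b < c) (hcd : c < d)
    (hsign : ∀ y ∈ Set.Ioo a c, y < f₀ y) : False := by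
  have hbI : b ∈ Set.Ioo a c := ⟨hab, hbc⟩
  have hgpl : IsPL0 (f₁⁻¹ * f₀) := h₁.inv.mul h₀
  have key : ∀ n : ℕ, 1 ≤ n → f₁ ((f₀ ^ n) b) = (f₀ ^ (n+1)) b := by
    intro n hn
    have hKpl : IsPL0 (f₀ ^ n * f₁ * (f₀ ^ n)⁻¹) :=
      ((h₀.pow n).mul h₁).mul (h₀.pow n).inv
    have horb : IsOrbital (f₀ ^ n * f₁ * (f₀ ^ n)⁻¹) ((f₀ ^ n) b) ((f₀ ^ n) d) :=
      orbital_conj (h₀.pow n).1 ho₁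
    have hfix := (orbfix hKpl hgpl (hcomm n hn).symm horb).1
    -- hfix : (f₁⁻¹ * f₀) ((f₀ ^ n) b) = (f₀ ^ n) b
    have : f₁⁻¹ (f₀ ((f₀ ^ n) b)) = (f₀ ^ n) b := by
      simpa [Equiv.Perm.mul_apply] using hfix
    have := congrArg (⇑f₁) this
    rw [Equiv.Perm.apply_inv_self] at this
    rw [← this]
    exact (perm_pow_succ_apply f₀ n b).symm
  have htop : Filter.Tendsto (fun n : ℕ => (f₀ ^ n) b) Filter.atTop (𝓝 c) :=
    orbit_tendsto_top h₀ ho₀ hsign hbI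
  have h1 : Filter.Tendsto (fun n : ℕ => (f₀ ^ (n+1)) b) Filter.atTop (𝓝 c) :=
    htop.comp (Filter.tendsto_add_atTop_nat 1)
  have h2 : Filter.Tendsto (fun n : ℕ => f₁ ((f₀ ^ (n+1)) b)) Filter.atTop (𝓝 (f₁ c)) :=
    (h₁.continuous.tendsto c).comp h1
  have h3 : Filter.Tendsto (fun n : ℕ => (f₀ ^ (n+2)) b) Filter.atTop (𝓝 c) :=
    htop.comp (Filter.tendsto_add_atTop_nat 2)
  have h4 : Filter.Tendsto (fun n : ℕ => f₁ ((f₀ ^ (n+1)) b)) Filter.atTop (𝓝 c) := by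
    have : (fun n : ℕ => f₁ ((f₀ ^ (n+1)) b)) = fun n : ℕ => (f₀ ^ (n+2)) b := by
      funext n
      exact key (n+1) (by omega)
    rw [this]
    exact h3
  have : f₁ c = c := tendsto_nhds_unique h2 h4
  exact ho₁.2.1 ⟨hbc, hcd⟩ this

theorem case2 {f₀ f₁ : Equiv.Perm ℝ} (h₀ : IsPL0 f₀) (h₁ : IsPL0 f₁)
    (hcomm : ∀ n : ℕ, 1 ≤ n → Commute (f₁⁻¹ * f₀) (f₀ ^ n * f₁ * (f₀ ^ n)⁻¹))
    {a c b d : ℝ} (ho₀ : IsOrbital f₀ a c) (ho₁ : IsOrbital f₁ b d)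
    (hba : b < a) (had : a < d) (hdc : d < c)
    (hsign : ∀ y ∈ Set.Ioo a c, y < f₀ y) : False := by
  have hdI : d ∈ Set.Ioo a c := ⟨had, hdc⟩
  have hgpl : IsPL0 (f₁⁻¹ * f₀) := h₁.inv.mul h₀
  have hunit := orbital_subset_unit h₁ ho₁
  -- the orbit of d under f₀ consists of fixed points of g
  have gfix : ∀ n : ℕ, 1 ≤ n → (f₁⁻¹ * f₀) ((f₀ ^ n) d) = (f₀ ^ n) d := by
    intro n hn
    have hKpl : IsPL0 (f₀ ^ n * f₁ * (f₀ ^ n)⁻¹) :=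
      ((h₀.pow n).mul h₁).mul (h₀.pow n).inv
    have horb : IsOrbital (f₀ ^ n * f₁ * (f₀ ^ n)⁻¹) ((f₀ ^ n) b) ((f₀ ^ n) d) :=
      orbital_conj (h₀.pow n).1 ho₁
    exact (orbfix hKpl hgpl (hcomm n hn).symm horb).2
  -- germ of g at c⁻ is trivial
  set x : ℕ → ℝ := fun n => (f₀ ^ (n+1)) d with hx
  have hmem : ∀ n, x n ∈ Set.Ioo a c := fun n =>
    orbital_pow_mem h₀.1 ho₀.2.2.1 ho₀.2.2.2 hdI (n+1)
  have hmono : StrictMono x := by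
    apply strictMono_nat_of_lt_succ
    intro n
    rw [hx]
    simp only
    rw [perm_pow_succ_apply f₀ (n+1)]
    exact hsign _ (hmem n)
  have hfix : ∀ n, (f₁⁻¹ * f₀) (x n) = x n := fun n => gfix (n+1) (by omega)
  have hlim : Filter.Tendsto x Filter.atTop (𝓝 c) :=
    (orbit_tendsto_top h₀ ho₀ hsign hdI).comp (Filter.tendsto_add_atTop_nat 1)
  obtain ⟨ε, hε, hid⟩ := germ_id hgpl hmono hfix hlim
  -- a is in the support of g
  have hsupp_a : (f₁⁻¹ * f₀) a ≠ a := by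
    rw [Equiv.Perm.mul_apply, ho₀.2.2.1]
    intro h
    apply ho₁.2.1 ⟨hba, had⟩
    conv_lhs => rw [← h]
    simp
  -- construct the orbital of g containing a
  set Fg : Set ℝ := {z | (f₁⁻¹ * f₀) z = z} with hFg
  have hFgclosed : IsClosed Fg := isClosed_eq hgpl.continuous continuous_id
  have hQne : (Fg ∩ Set.Ici a).Nonempty := by
    refine ⟨1, ?_, ?_⟩
    · exact hgpl.2.2.1 1 le_rfl
    · simp only [Set.mem_Ici]
      linarith [hunit.2]
  have hQbdd : BddBelow (Fg ∩ Set.Ici a) := ⟨a, fun z hz => hz.2⟩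
  set q := sInf (Fg ∩ Set.Ici a) with hq
  have hqmem : q ∈ Fg ∩ Set.Ici a :=
    (hFgclosed.inter isClosed_Ici).csInf_mem hQne hQbdd
  have haq : a < q := by
    rcases lt_or_eq_of_le (Set.mem_Ici.1 hqmem.2) with h | h
    · exact h
    · exact absurd hqmem.1 (h ▸ hsupp_a)
  have hPne : (Fg ∩ Set.Iic a).Nonempty := by
    refine ⟨0, ?_, ?_⟩
    · exact hgpl.2.1 0 le_rfl
    · simp only [Set.mem_Iic]
      linarith [hunit.1]
  have hPbdd : BddAbove (Fg ∩ Set.Iic a) := ⟨a, fun z hz => hz.2⟩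
  set p := sSup (Fg ∩ Set.Iic a) with hp
  have hpmem : p ∈ Fg ∩ Set.Iic a :=
    (hFgclosed.inter isClosed_Iic).csSup_mem hPne hPbdd
  have hpa : p < a := by
    rcases lt_or_eq_of_le (Set.mem_Iic.1 hpmem.2) with h | h
    · exact h
    · exact absurd hpmem.1 (h ▸ hsupp_a)
  have horb_g : IsOrbital (f₁⁻¹ * f₀) p q := by
    refine ⟨lt_trans hpa haq, ?_, hpmem.1, hqmem.1⟩
    intro z hz hzfix
    rcases le_total z a with h | h
    · have : z ≤ p := le_csSup hPbdd ⟨hzfix, h⟩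
      linarith [hz.1]
    · have : q ≤ z := csInf_le hQbdd ⟨hzfix, h⟩
      linarith [hz.2]
  -- q < c
  have hqc : q < c := by
    by_contra hcon
    push_neg at hcon
    set z := max (c - ε/2) ((a+c)/2) with hzdef
    have hac : a < c := lt_trans had hdc
    have hz1 : z < c := max_lt (by linarith) (by linarith)
    have hz2 : c - ε < z := lt_of_lt_of_le (by linarith) (le_max_left _ _)
    have hz3 : p < z := lt_of_lt_of_le (by linarith : p < (a+c)/2) (le_max_right _ _)
    have hz4 : z < q := lt_of_lt_of_le hz1 hcon
    exact horb_g.2.1 ⟨hz3, hz4⟩ (hid z ⟨hz2, hz1⟩)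
  -- pull q back near a
  have hqI : q ∈ Set.Ioo a c := ⟨haq, hqc⟩
  have hbot : Filter.Tendsto (fun n : ℕ => (f₀⁻¹ ^ n) q) Filter.atTop (𝓝 a) :=
    orbit_tendsto_bot h₀.inv ho₀.inv (sign_inv h₀ ho₀ hsign) hqI
  have hev : ∀ᶠ n : ℕ in Filter.atTop, (f₀⁻¹ ^ n) q < d :=
    hbot.eventually (eventually_lt_nhds had)
  obtain ⟨n, hnd, hn1⟩ := (hev.and (Filter.eventually_ge_atTop 1)).exists
  set y := (f₀⁻¹ ^ n) q with hy
  have hya : a < y :=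
    (orbital_pow_mem h₀.inv.1 ho₀.inv.2.2.1 ho₀.inv.2.2.2 hqI n).1
  -- K n fixes q
  have hKpl : IsPL0 (f₀ ^ n * f₁ * (f₀ ^ n)⁻¹) :=
    ((h₀.pow n).mul h₁).mul (h₀.pow n).inv
  have hKfix : (f₀ ^ n * f₁ * (f₀ ^ n)⁻¹) q = q :=
    (orbfix hgpl hKpl (hcomm n hn1) horb_g).2
  have hf₁y : f₁ y = y := by
    have h1 : (f₀ ^ n) (f₁ ((f₀ ^ n)⁻¹ q)) = q := by
      simpa [Equiv.Perm.mul_apply] using hKfix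
    have h2 : (f₀ ^ n)⁻¹ q = y := by rw [hy, inv_pow]
    rw [h2] at h1
    have := congrArg (⇑(f₀ ^ n)⁻¹) h1
    simpa [h2] using this
  exact ho₁.2.1 ⟨lt_trans hba hya, hnd⟩ hf₁y

theorem comm_all_reflect {f₀ f₁ : Equiv.Perm ℝ}
    (h : ∀ n : ℕ, 1 ≤ n → Commute (f₁⁻¹ * f₀) (f₀ ^ n * f₁ * (f₀ ^ n)⁻¹)) :
    ∀ n : ℕ, 1 ≤ n → Commute ((ρ * f₁ * ρ⁻¹)⁻¹ * (ρ * f₀ * ρ⁻¹))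
      ((ρ * f₀ * ρ⁻¹) ^ n * (ρ * f₁ * ρ⁻¹) * ((ρ * f₀ * ρ⁻¹) ^ n)⁻¹) := by
  intro n hn
  have hmap := (h n hn).map (MulAut.conj ρ).toMonoidHom
  have e1 : (MulAut.conj ρ).toMonoidHom (f₁⁻¹ * f₀) = (ρ * f₁ * ρ⁻¹)⁻¹ * (ρ * f₀ * ρ⁻¹) := by
    simp only [map_mul, map_inv, MulEquiv.coe_toMonoidHom, MulAut.conj_apply]
  have e2 : (MulAut.conj ρ).toMonoidHom (f₀ ^ n * f₁ * (f₀ ^ n)⁻¹)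
      = (ρ * f₀ * ρ⁻¹) ^ n * (ρ * f₁ * ρ⁻¹) * ((ρ * f₀ * ρ⁻¹) ^ n)⁻¹ := by
    simp only [map_mul, map_inv, map_pow, MulEquiv.coe_toMonoidHom, MulAut.conj_apply]
  rw [e1, e2] at hmap
  exact hmap


end ThompsonAux

/-- If `f₀, f₁ ∈ PL₀(I)` satisfy the two standard relations of Thompson's group `F`,
`A` is an orbital of `f₀`, `B` is an orbital of `f₁` and `A ∩ B ≠ ∅`, then
`A ⊆ B` or `B ⊆ A`. -/
theorem orbitals_nested (f₀ f₁ : Equiv.Perm ℝ)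
    (h₀ : IsPL0 f₀) (h₁ : IsPL0 f₁) (hrel : ThompsonRel f₀ f₁) (a c b d : ℝ)
    (horb₀ : IsOrbital f₀ a c) (horb₁ : IsOrbital f₁ b d)
    (hmeet : (Set.Ioo a c ∩ Set.Ioo b d).Nonempty) :
    Set.Ioo a c ⊆ Set.Ioo b d ∨ Set.Ioo b d ⊆ Set.Ioo a c := by
  by_contra hcon
  push_neg at hcon
  obtain ⟨hnAB, hnBA⟩ := hcon
  obtain ⟨x0, hx0A, hx0B⟩ := hmeet
  have hcomm := comm_all hrel
  have h1 : a < b ∨ d < c := by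
    by_contra h
    push_neg at h
    exact hnAB (Set.Ioo_subset_Ioo h.1 h.2)
  have h2 : b < a ∨ c < d := by
    by_contra h
    push_neg at h
    exact hnBA (Set.Ioo_subset_Ioo h.1 h.2)
  -- sign of f₀ on its orbital
  have hsplit : (∀ y ∈ Set.Ioo a c, y < f₀ y) ∨ (∀ y ∈ Set.Ioo a c, f₀ y < y) := by
    rcases lt_trichotomy x0 (f₀ x0) with h | h | h
    · left; exact fun y hy => orbital_sign h₀ horb₀ hx0A hy h
    · exact absurd h.symm (horb₀.2.1 hx0A)
    · right
      intro y hy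
      rcases lt_trichotomy (f₀ y) y with h' | h' | h'
      · exact h'
      · exact absurd h' (horb₀.2.1 hy)
      · exact absurd (orbital_sign h₀ horb₀ hy hx0A h') (by linarith)
  rcases h1 with hab | hdc
  · -- configuration 1 : a < b < c < d
    have hcd : c < d := by
      rcases h2 with h | h
      · linarith
      · exact h
    have hbc : b < c := lt_trans hx0B.1 hx0A.2
    rcases hsplit with hs | hs
    · exact case1 h₀ h₁ hcomm horb₀ horb₁ hab hbc hcd hs
    · -- reflect to configuration 2
      refine case2 (ρ_pl0 h₀) (ρ_pl0 h₁) (comm_all_reflect hcomm)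
        (ρ_orbital horb₀) (ρ_orbital horb₁)
        (by linarith : (1:ℝ) - d < 1 - c) (by linarith : (1:ℝ) - c < 1 - b)
        (by linarith : (1:ℝ) - b < 1 - a) ?_
      intro y hy
      rw [ρ_conj_apply]
      have := hs (1 - y) ⟨by linarith [hy.2], by linarith [hy.1]⟩
      linarith
  · -- configuration 2 : b < a < d < c
    have hba : b < a := by
      rcases h2 with h | h
      · exact h
      · linarith
    have had : a < d := lt_trans hx0A.1 hx0B.2
    rcases hsplit with hs | hs
    · exact case2 h₀ h₁ hcomm horb₀ horb₁ hba had hdc hs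
    · refine case1 (ρ_pl0 h₀) (ρ_pl0 h₁) (comm_all_reflect hcomm)
        (ρ_orbital horb₀) (ρ_orbital horb₁)
        (by linarith : (1:ℝ) - c < 1 - d) (by linarith : (1:ℝ) - d < 1 - a)
        (by linarith : (1:ℝ) - a < 1 - b) ?_
      intro y hy
      rw [ρ_conj_apply]
      have := hs (1 - y) ⟨by linarith [hy.2], by linarith [hy.1]⟩
      linarith
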